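/- arXiv:quant-ph/0506241 — 2 statements merged into one kernel-verified Lean document; each statement's English description precedes it below -/
import Mathlib

section
/- Let ψ be a nonzero n-qubit state vector with triples T_k and let 1 ≤ l < l' ≤ n. Then dim_ℝ⟨T_l ∪ T_{l'}⟩ = 3 if and only if ψ factors as a product of a singlet in qubits l and l' times a state in the remaining n−2 qubits; that is, if and only if ψ is local unitary equivalent to a state vector of the form s ⊗ φ (with tensor factors ordered so that s occupies qubits l and l'), where s is the two-qubit vector |00⟩ + |11⟩ and φ is an (n−2)-qubit state vector. -/
/-- An `n`-qubit state vector, identified with its coefficient function. -/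
abbrev QState (n : ℕ) := (Fin n → Fin 2) → ℂ

/-- Complement the `k`-th bit of a multi-index. -/
def flipBit {n : ℕ} (k : Fin n) (I : Fin n → Fin 2) : Fin n → Fin 2 :=
  Function.update I k (1 - I k)

/-- `(A_k ψ)(I) = i (−1)^{i_k} c_I`. -/
def Aop {n : ℕ} (k : Fin n) (ψ : QState n) : QState n :=
  fun I => Complex.I * (-1 : ℂ) ^ ((I k : ℕ)) * ψ I

/-- `(B_k ψ)(I) = (−1)^{i_k} c_{I_k}`. -/
def Bop {n : ℕ} (k : Fin n) (ψ : QState n) : QState n :=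
  fun I => (-1 : ℂ) ^ ((I k : ℕ)) * ψ (flipBit k I)

/-- `(C_k ψ)(I) = i c_{I_k}`. -/
def Cop {n : ℕ} (k : Fin n) (ψ : QState n) : QState n :=
  fun I => Complex.I * ψ (flipBit k I)

/-- The triple `T_k = {A_k ψ, B_k ψ, C_k ψ}`. -/
def triple {n : ℕ} (k : Fin n) (ψ : QState n) : Set (QState n) :=
  {Aop k ψ, Bop k ψ, Cop k ψ}

/-- Real inner product: the real part of the Hermitian inner product. -/
def rdot {n : ℕ} (φ ψ : QState n) : ℝ :=
  ∑ I : Fin n → Fin 2, ((starRingEnd ℂ) (φ I) * ψ I).re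

/-- Real dimension of the span of a set of vectors. -/
noncomputable def rdim {n : ℕ} (S : Set (QState n)) : ℕ :=
  Module.finrank ℝ (Submodule.span ℝ S)

/-- The set of columns of the matrix `M` associated to `ψ`. -/
def columns {n : ℕ} (ψ : QState n) : Set (QState n) :=
  (⋃ k : Fin n, triple k ψ) ∪ {(-Complex.I) • ψ}

/-- `rank_ℝ M`: the real dimension of the span of the columns of `M`. -/
noncomputable def rankM {n : ℕ} (ψ : QState n) : ℕ := rdim (columns ψ)

/-- The action of `(U_1, …, U_n) ∈ SU(2)^n` on an `n`-qubit state,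
`U_1 ⊗ ⋯ ⊗ U_n`. -/
noncomputable def actLU {n : ℕ} (U : ∀ _ : Fin n, Matrix.specialUnitaryGroup (Fin 2) ℂ)
    (ψ : QState n) : QState n :=
  fun I => ∑ J : Fin n → Fin 2, (∏ k : Fin n, (U k : Matrix (Fin 2) (Fin 2) ℂ) (I k) (J k)) * ψ J

/-- Local unitary equivalence of two state vectors. -/
def LUEquiv {n : ℕ} (ψ ψ' : QState n) : Prop :=
  ∃ U : ∀ _ : Fin n, Matrix.specialUnitaryGroup (Fin 2) ℂ, actLU U ψ = ψ'

/-- Tensor product of coefficient functions. -/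
def tensorState {n₁ n₂ : ℕ} (ψ₁ : QState n₁) (ψ₂ : QState n₂) : QState (n₁ + n₂) :=
  fun I => ψ₁ (fun k => I (Fin.castAdd n₂ k)) * ψ₂ (fun k => I (Fin.natAdd n₁ k))

/-- A perfect matching of the `n` qubits, encoded as an involution with no fixed
point when `n` is even and exactly one fixed point (the leftover qubit) when `n`
is odd. -/
def IsMatching {n : ℕ} (m : Fin n → Fin n) : Prop :=
  Function.Involutive m ∧ (Finset.univ.filter fun k => m k = k).card = n % 2

/-- The singlet product for a matching `m`: the tensor product over matched pairs
of `|00⟩ + |11⟩`, times the single-qubit vector `χ` in the leftover qubit when `n`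
is odd. -/
def singletProduct {n : ℕ} (m : Fin n → Fin n) (χ : Fin 2 → ℂ) : QState n :=
  fun I => (∏ k : Fin n, if I k = I (m k) then (1 : ℂ) else 0) *
    ∏ k ∈ Finset.univ.filter (fun k => m k = k), χ (I k)

/-- The minimum possible rank of `M`: `3n/2 + 1` for even `n`, `(3n+1)/2 + 1` for odd `n`. -/
def minRank (n : ℕ) : ℕ := if Even n then 3 * n / 2 + 1 else (3 * n + 1) / 2 + 1
section Stage1
open Complex

variable {n : ℕ}

lemma fin2cases (b : Fin 2) : b = 0 ∨ b = 1 := by omega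

lemma flipBit_flip_flip (k : Fin n) (I : Fin n → Fin 2) : flipBit k (flipBit k I) = I := by
  funext m
  rcases eq_or_ne m k with rfl | h
  · simp only [flipBit, Function.update_self]
    rcases fin2cases (I m) with h | h <;> rw [h] <;> rfl
  · simp [flipBit, Function.update_of_ne h]

lemma flip_bij (k : Fin n) : Function.Bijective (flipBit (n := n) k) :=
  Function.Involutive.bijective (flipBit_flip_flip k)

lemma flip_apply_self (k : Fin n) (I : Fin n → Fin 2) : flipBit k I k = 1 - I k := by
  simp [flipBit]

lemma neg_one_pow_fin2 (b : Fin 2) : ((-1 : ℂ)) ^ ((1 - b : Fin 2) : ℕ) = -(-1 : ℂ) ^ (b : ℕ) := by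
  rcases fin2cases b with h | h <;> rw [h] <;> norm_num

lemma rdot_eq_re (φ ψ : QState n) : rdot φ ψ = (∑ I, (starRingEnd ℂ) (φ I) * ψ I).re := by
  rw [rdot, Complex.re_sum]

lemma rdot_self_eq (ψ : QState n) : rdot ψ ψ = ∑ I, Complex.normSq (ψ I) := by
  unfold rdot
  refine Finset.sum_congr rfl fun I _ => ?_
  simp [Complex.mul_re, Complex.normSq_apply, mul_comm]

lemma rdot_self_pos {ψ : QState n} (hψ : ψ ≠ 0) : 0 < rdot ψ ψ := by
  rw [rdot_self_eq]
  obtain ⟨I, hI⟩ := Function.ne_iff.mp hψ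
  exact Finset.sum_pos' (fun J _ => Complex.normSq_nonneg _)
    ⟨I, Finset.mem_univ I, by simpa using Complex.normSq_pos.mpr hI⟩

lemma rdot_comm (φ ψ : QState n) : rdot φ ψ = rdot ψ φ := by
  unfold rdot
  refine Finset.sum_congr rfl fun I _ => ?_
  simp [Complex.mul_re]
  ring

lemma rdot_zero_right (φ : QState n) : rdot φ 0 = 0 := by simp [rdot]

lemma rdot_sum_smul_right {ι : Type*} [Fintype ι] (φ : QState n) (g : ι → ℝ) (v : ι → QState n) :
    rdot φ (∑ i, g i • v i) = ∑ i, g i * rdot φ (v i) := by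
  unfold rdot
  have : ∀ I, ((starRingEnd ℂ) (φ I) * (∑ i, g i • v i) I).re
      = ∑ i, g i * ((starRingEnd ℂ) (φ I) * v i I).re := by
    intro I
    simp only [Finset.sum_apply, Pi.smul_apply, Finset.mul_sum, Complex.re_sum]
    refine Finset.sum_congr rfl fun i _ => ?_
    simp [Complex.real_smul, Complex.mul_re]
    ring
  simp only [this]
  rw [Finset.sum_comm]
  simp [Finset.mul_sum]

end Stage1
section Stage2
open Complex

variable {n : ℕ}

lemma rdot_AA (k : Fin n) (ψ : QState n) : rdot (Aop k ψ) (Aop k ψ) = rdot ψ ψ := by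
  unfold rdot Aop
  refine Finset.sum_congr rfl fun I _ => ?_
  rcases fin2cases (I k) with h | h <;> rw [h] <;> simp [Complex.mul_re] <;> ring

lemma rdot_BB (k : Fin n) (ψ : QState n) : rdot (Bop k ψ) (Bop k ψ) = rdot ψ ψ := by
  unfold rdot Bop
  have h1 : ∀ I, ((starRingEnd ℂ) ((-1:ℂ) ^ ((I k : ℕ)) * ψ (flipBit k I)) *
      ((-1:ℂ) ^ ((I k : ℕ)) * ψ (flipBit k I))).re
      = ((starRingEnd ℂ) (ψ (flipBit k I)) * ψ (flipBit k I)).re := by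
    intro I
    rcases fin2cases (I k) with h | h <;> rw [h] <;> simp
  simp only [h1]
  exact Fintype.sum_bijective _ (flip_bij k)
    _ _ (fun I => rfl)

lemma rdot_CC (k : Fin n) (ψ : QState n) : rdot (Cop k ψ) (Cop k ψ) = rdot ψ ψ := by
  unfold rdot Cop
  have h1 : ∀ I, ((starRingEnd ℂ) (Complex.I * ψ (flipBit k I)) *
      (Complex.I * ψ (flipBit k I))).re
      = ((starRingEnd ℂ) (ψ (flipBit k I)) * ψ (flipBit k I)).re := by
    intro I; simp [Complex.mul_re]
  simp only [h1]
  exact Fintype.sum_bijective _ (flip_bij k) _ _ (fun I => rfl)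

lemma rdot_AB (k : Fin n) (ψ : QState n) : rdot (Aop k ψ) (Bop k ψ) = 0 := by
  rw [rdot_eq_re]
  have h1 : ∀ I : Fin n → Fin 2, (starRingEnd ℂ) (Aop k ψ I) * Bop k ψ I
      = -Complex.I * ((starRingEnd ℂ) (ψ I) * ψ (flipBit k I)) := by
    intro I; unfold Aop Bop
    rcases fin2cases (I k) with h | h <;> rw [h] <;> simp <;> ring
  rw [Finset.sum_congr rfl fun I _ => h1 I, ← Finset.mul_sum]
  set T := ∑ I, (starRingEnd ℂ) (ψ I) * ψ (flipBit k I) with hT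
  have hc : (starRingEnd ℂ) T = T := by
    rw [hT, map_sum]
    exact Fintype.sum_bijective (flipBit k) (flip_bij k)
      (fun I => (starRingEnd ℂ) ((starRingEnd ℂ) (ψ I) * ψ (flipBit k I)))
      (fun I => (starRingEnd ℂ) (ψ I) * ψ (flipBit k I))
      (fun I => by simp only [map_mul, Complex.conj_conj, flipBit_flip_flip]; ring)
  have him : T.im = 0 := by
    have h3 := congrArg Complex.im hc
    simp at h3
    linarith
  simp [Complex.mul_re, him]

lemma rdot_AC (k : Fin n) (ψ : QState n) : rdot (Aop k ψ) (Cop k ψ) = 0 := by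
  rw [rdot_eq_re]
  have h1 : ∀ I : Fin n → Fin 2, (starRingEnd ℂ) (Aop k ψ I) * Cop k ψ I
      = (-1:ℂ) ^ ((I k : ℕ)) * ((starRingEnd ℂ) (ψ I) * ψ (flipBit k I)) := by
    intro I; unfold Aop Cop
    rcases fin2cases (I k) with h | h
    · rw [h]; simp
      linear_combination (-(starRingEnd ℂ) (ψ I) * ψ (flipBit k I)) * Complex.I_sq
    · rw [h]; simp
      linear_combination ((starRingEnd ℂ) (ψ I) * ψ (flipBit k I)) * Complex.I_sq
  rw [Finset.sum_congr rfl fun I _ => h1 I]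
  set S := ∑ I, (-1:ℂ) ^ ((I k : ℕ)) * ((starRingEnd ℂ) (ψ I) * ψ (flipBit k I)) with hS
  have hc : (starRingEnd ℂ) S = -S := by
    rw [hS, map_sum]
    have h4 := Fintype.sum_bijective (flipBit k) (flip_bij k)
      (fun I => (starRingEnd ℂ) ((-1:ℂ) ^ ((I k : ℕ)) * ((starRingEnd ℂ) (ψ I) * ψ (flipBit k I))))
      (fun J => -((-1:ℂ) ^ ((J k : ℕ)) * ((starRingEnd ℂ) (ψ J) * ψ (flipBit k J))))
      (fun I => by
        simp only [map_mul, map_pow, map_neg, map_one, Complex.conj_conj, flipBit_flip_flip,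
          flip_apply_self, neg_one_pow_fin2]
        ring)
    rw [h4, ← hS]
    simp
    exact hS.symm
  have hre : S.re = 0 := by
    have h3 := congrArg Complex.re hc
    simp at h3
    linarith
  rw [Complex.re_sum, ← hS] at *
  exact hre

lemma rdot_BC (k : Fin n) (ψ : QState n) : rdot (Bop k ψ) (Cop k ψ) = 0 := by
  unfold rdot Bop Cop
  refine Finset.sum_eq_zero fun I _ => ?_
  rcases fin2cases (I k) with h | h <;> rw [h] <;> simp [Complex.mul_re] <;> ring

end Stage2
section Stage3
open Complex

variable {n : ℕ}

lemma triple_orth (k : Fin n) (ψ : QState n) :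
    ∀ i j : Fin 3, rdot (![Aop k ψ, Bop k ψ, Cop k ψ] i) (![Aop k ψ, Bop k ψ, Cop k ψ] j)
      = if i = j then rdot ψ ψ else 0 := by
  intro i j
  fin_cases i <;> fin_cases j <;>
    simp [rdot_AA, rdot_BB, rdot_CC, rdot_AB, rdot_AC, rdot_BC] <;>
    rw [rdot_comm] <;> simp [rdot_AB, rdot_AC, rdot_BC]

lemma triple_li {k : Fin n} {ψ : QState n} (hψ : ψ ≠ 0) :
    LinearIndependent ℝ ![Aop k ψ, Bop k ψ, Cop k ψ] := by
  set v := ![Aop k ψ, Bop k ψ, Cop k ψ] with hv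
  rw [Fintype.linearIndependent_iff]
  intro g hg j
  have h1 : rdot (v j) (∑ i, g i • v i) = g j * rdot ψ ψ := by
    rw [rdot_sum_smul_right]
    rw [Finset.sum_eq_single j]
    · rw [triple_orth]; simp
    · intro i _ hij
      rw [triple_orth]; simp [Ne.symm hij]
    · simp
  rw [hg, rdot_zero_right] at h1
  have h2 := (rdot_self_pos hψ).ne'
  rcases mul_eq_zero.mp h1.symm with h | h
  · exact h
  · exact absurd h h2

lemma triple_eq_range (k : Fin n) (ψ : QState n) :
    triple k ψ = Set.range ![Aop k ψ, Bop k ψ, Cop k ψ] := by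
  unfold triple
  ext x
  constructor
  · intro hx
    rcases hx with rfl | rfl | hx
    · exact ⟨0, rfl⟩
    · exact ⟨1, rfl⟩
    · rw [Set.mem_singleton_iff] at hx; subst hx; exact ⟨2, rfl⟩
  · rintro ⟨i, rfl⟩
    fin_cases i
    · exact Set.mem_insert _ _
    · exact Set.mem_insert_of_mem _ (Set.mem_insert _ _)
    · exact Set.mem_insert_of_mem _ (Set.mem_insert_of_mem _ rfl)

lemma rdim_triple {k : Fin n} {ψ : QState n} (hψ : ψ ≠ 0) : rdim (triple k ψ) = 3 := by
  rw [rdim, triple_eq_range]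
  rw [finrank_span_eq_card (triple_li hψ)]
  simp

lemma mem_span_three {V : Type*} [AddCommGroup V] [Module ℝ V] {x a b c : V}
    (h : x ∈ Submodule.span ℝ ({a, b, c} : Set V)) :
    ∃ α β γ : ℝ, x = α • a + β • b + γ • c := by
  rw [Submodule.mem_span_insert] at h
  obtain ⟨α, y, hy, rfl⟩ := h
  rw [Submodule.mem_span_insert] at hy
  obtain ⟨β, z, hz, rfl⟩ := hy
  rw [Submodule.mem_span_singleton] at hz
  obtain ⟨γ, rfl⟩ := hz
  exact ⟨α, β, γ, by abel⟩

end Stage3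
section Stage4
open Complex

variable {n : ℕ}

/-- Generalized (not necessarily unitary) local action. -/
noncomputable def genAct (A : Fin n → Matrix (Fin 2) (Fin 2) ℂ) (ψ : QState n) : QState n :=
  fun I => ∑ J : Fin n → Fin 2, (∏ k : Fin n, A k (I k) (J k)) * ψ J

lemma actLU_eq_genAct (U : ∀ _ : Fin n, Matrix.specialUnitaryGroup (Fin 2) ℂ) (ψ : QState n) :
    actLU U ψ = genAct (fun k => (U k : Matrix (Fin 2) (Fin 2) ℂ)) ψ := rfl

/-- One-site operator. -/
noncomputable def Pop (M : Matrix (Fin 2) (Fin 2) ℂ) (k : Fin n) (ψ : QState n) : QState n :=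
  fun I => ∑ j : Fin 2, M (I k) j * ψ (Function.update I k j)

lemma genAct_comp (A B : Fin n → Matrix (Fin 2) (Fin 2) ℂ) (ψ : QState n) :
    genAct A (genAct B ψ) = genAct (fun k => A k * B k) ψ := by
  funext I
  unfold genAct
  simp only [Finset.mul_sum]
  rw [Finset.sum_comm]
  refine Finset.sum_congr rfl fun K _ => ?_
  have h1 : ∀ J : Fin n → Fin 2,
      (∏ m, A m (I m) (J m)) * ((∏ m, B m (J m) (K m)) * ψ K)
      = (∏ m, A m (I m) (J m) * B m (J m) (K m)) * ψ K := by
    intro J; rw [Finset.prod_mul_distrib]; ring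
  rw [Finset.sum_congr rfl fun J _ => h1 J, ← Finset.sum_mul]
  congr 1
  rw [← Fintype.prod_sum fun m j => A m (I m) j * B m j (K m)]
  exact Finset.prod_congr rfl fun m _ => by rw [Matrix.mul_apply]

lemma update_inj (I : Fin n → Fin 2) (k : Fin n) :
    Function.Injective (Function.update I k) := by
  intro a b hab
  have := congrFun hab k
  simpa using this

lemma genAct_single (k : Fin n) (M : Matrix (Fin 2) (Fin 2) ℂ) (ψ : QState n) :
    genAct (fun m => if m = k then M else 1) ψ = Pop M k ψ := by
  funext I
  unfold genAct Pop
  rw [← Finset.sum_subset (Finset.subset_univ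
      ((Finset.univ : Finset (Fin 2)).image (Function.update I k)))]
  · rw [Finset.sum_image (fun a _ b _ h => update_inj I k h)]
    refine Finset.sum_congr rfl fun j _ => ?_
    congr 1
    rw [Finset.prod_eq_single k]
    · simp
    · intro m _ hm
      show (if m = k then M else 1) (I m) (Function.update I k j m) = 1
      rw [if_neg hm, Function.update_of_ne hm]
      exact Matrix.one_apply_eq _
    · simp
  · intro J _ hJ
    have h2 : ∃ m, m ≠ k ∧ J m ≠ I m := by
      by_contra hc
      push_neg at hc
      apply hJ
      rw [Finset.mem_image]
      refine ⟨J k, Finset.mem_univ _, ?_⟩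
      funext m
      rcases eq_or_ne m k with rfl | hm
      · simp
      · rw [Function.update_of_ne hm]
        exact (hc m hm).symm ▸ rfl
    obtain ⟨m, hmk, hm⟩ := h2
    refine mul_eq_zero_of_left (Finset.prod_eq_zero (Finset.mem_univ m) ?_) _
    show (if m = k then M else 1) (I m) (J m) = 0
    rw [if_neg hmk]
    exact Matrix.one_apply_ne fun h => hm h.symm

lemma genAct_one (ψ : QState n) : genAct (fun _ => (1 : Matrix (Fin 2) (Fin 2) ℂ)) ψ = ψ := by
  funext I
  unfold genAct
  rw [Finset.sum_eq_single I]
  · simp [Matrix.one_apply]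
  · intro J _ hJ
    obtain ⟨m, hm⟩ := Function.ne_iff.mp hJ
    refine mul_eq_zero_of_left (Finset.prod_eq_zero (Finset.mem_univ m) ?_) _
    exact Matrix.one_apply_ne fun h => hm h.symm
  · simp

end Stage4
section Stage5
open Complex Matrix

variable {n : ℕ}

def Pz : Matrix (Fin 2) (Fin 2) ℂ := !![1, 0; 0, -1]
def Px : Matrix (Fin 2) (Fin 2) ℂ := !![0, 1; 1, 0]
def Pzx : Matrix (Fin 2) (Fin 2) ℂ := !![0, 1; -1, 0]

lemma Aop_eq_Pop (k : Fin n) (ψ : QState n) : Aop k ψ = Pop (Complex.I • Pz) k ψ := by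
  funext I
  unfold Aop Pop
  rw [Fin.sum_univ_two]
  rcases fin2cases (I k) with h | h
  · have h2 : Function.update I k 0 = I := by rw [← h]; exact Function.update_eq_self k I
    rw [h, h2]; simp [Pz]
  · have h2 : Function.update I k 1 = I := by rw [← h]; exact Function.update_eq_self k I
    rw [h, h2]; simp [Pz]

lemma Bop_eq_Pop (k : Fin n) (ψ : QState n) : Bop k ψ = Pop Pzx k ψ := by
  funext I
  unfold Bop Pop
  rw [Fin.sum_univ_two]
  rcases fin2cases (I k) with h | h <;> rw [h] <;>
    simp [Pzx, flipBit, h]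

lemma Cop_eq_Pop (k : Fin n) (ψ : QState n) : Cop k ψ = Pop (Complex.I • Px) k ψ := by
  funext I
  unfold Cop Pop
  rw [Fin.sum_univ_two]
  rcases fin2cases (I k) with h | h <;> rw [h] <;>
    simp [Px, flipBit, h]

lemma Pop_add (M N : Matrix (Fin 2) (Fin 2) ℂ) (k : Fin n) (ψ : QState n) :
    Pop (M + N) k ψ = Pop M k ψ + Pop N k ψ := by
  funext I
  simp [Pop, add_mul, Finset.sum_add_distrib]

lemma Pop_rsmul (r : ℝ) (M : Matrix (Fin 2) (Fin 2) ℂ) (k : Fin n) (ψ : QState n) :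
    Pop (r • M) k ψ = r • Pop M k ψ := by
  funext I
  unfold Pop
  simp only [Pi.smul_apply, Finset.smul_sum]
  refine Finset.sum_congr rfl fun j _ => ?_
  simp only [Matrix.smul_apply, Pi.smul_apply, smul_eq_mul, Complex.real_smul]
  ring

/-- Decomposition of `i Q` for `Q` Hermitian traceless into the real span of the
three one-site generators. -/
lemma Pop_herm_decomp (Q : Matrix (Fin 2) (Fin 2) ℂ) (hH : Qᴴ = Q) (htr : Q 1 1 = - Q 0 0) :
    ∃ x y z : ℝ, ∀ (k : Fin n) (ψ : QState n),
      Pop (Complex.I • Q) k ψ = z • Aop k ψ + y • Bop k ψ + x • Cop k ψ := by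
  have h00 : Q 0 0 = ((Q 0 0).re : ℂ) := by
    have h := congrFun (congrFun hH 0) 0
    rw [Matrix.conjTranspose_apply] at h
    rw [← Complex.re_add_im (Q 0 0), Complex.conj_eq_iff_im.mp h]
    simp
  have h10 : Q 1 0 = ((Q 0 1).re : ℂ) - ((Q 0 1).im : ℂ) * Complex.I := by
    have h := congrFun (congrFun hH 1) 0
    rw [Matrix.conjTranspose_apply] at h
    rw [← h, ← Complex.re_add_im (Q 0 1)]
    simp [Complex.ext_iff]
  have h01 : Q 0 1 = ((Q 0 1).re : ℂ) + ((Q 0 1).im : ℂ) * Complex.I := (Complex.re_add_im _).symm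
  refine ⟨(Q 0 1).re, -(Q 0 1).im, (Q 0 0).re, fun k ψ => ?_⟩
  funext J
  unfold Pop Aop Bop Cop
  rw [Fin.sum_univ_two]
  simp only [Pi.add_apply, Pi.smul_apply, Matrix.smul_apply, smul_eq_mul, Complex.real_smul,
    Complex.ofReal_neg]
  rcases fin2cases (J k) with h | h
  · have h2 : Function.update J k 0 = J := by rw [← h]; exact Function.update_eq_self k J
    have h3 : flipBit k J = Function.update J k 1 := by rw [flipBit, h]; rfl
    rw [h, h2, h3, h00, h01]
    simp only [Fin.val_zero, pow_zero]
    simp only [Complex.ofReal_re, Complex.add_re, Complex.add_im, Complex.mul_re,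
      Complex.mul_im, Complex.I_re, Complex.I_im, Complex.ofReal_im, mul_zero, mul_one,
      zero_mul, sub_zero, add_zero, zero_add, zero_sub, neg_neg, neg_zero]
    linear_combination ((Q 0 1).im : ℂ) * ψ (Function.update J k 1) * Complex.I_sq
  · have h2 : Function.update J k 1 = J := by rw [← h]; exact Function.update_eq_self k J
    have h3 : flipBit k J = Function.update J k 0 := by rw [flipBit, h]; rfl
    rw [h, h2, h3, h10, htr, h00]
    simp only [Fin.val_one, pow_one]
    simp only [Complex.ofReal_re, Complex.add_re, Complex.add_im, Complex.mul_re,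
      Complex.mul_im, Complex.I_re, Complex.I_im, Complex.ofReal_im, mul_zero, mul_one,
      zero_mul, sub_zero, add_zero, zero_add, zero_sub, neg_neg, neg_zero]
    linear_combination (-((Q 0 1).im : ℂ)) * ψ (Function.update J k 0) * Complex.I_sq

end Stage5
section Stage6
open Complex Matrix

variable {n : ℕ}

abbrev SU2 := Matrix.specialUnitaryGroup (Fin 2) ℂ

lemma SU_star_mul_self (x : SU2) : star (x : Matrix (Fin 2) (Fin 2) ℂ) * x = 1 :=
  ((Submonoid.mem_inf.mp x.2).1).1

lemma SU_mul_star_self (x : SU2) : (x : Matrix (Fin 2) (Fin 2) ℂ) * star (x : Matrix (Fin 2) (Fin 2) ℂ) = 1 :=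
  ((Submonoid.mem_inf.mp x.2).1).2

lemma SU_det (x : SU2) : (x : Matrix (Fin 2) (Fin 2) ℂ).det = 1 :=
  (Submonoid.mem_inf.mp x.2).2

lemma star_mem_SU (x : SU2) : star (x : Matrix (Fin 2) (Fin 2) ℂ) ∈ Matrix.specialUnitaryGroup (Fin 2) ℂ := by
  rw [Matrix.mem_specialUnitaryGroup_iff]
  constructor
  · rw [Matrix.mem_unitaryGroup_iff, star_star]
    exact SU_star_mul_self x
  · show (Matrix.conjTranspose _).det = 1
    rw [Matrix.det_conjTranspose, SU_det]
    simp

/-- Pointwise star of a tuple of special unitaries. -/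
noncomputable def SUinv (U : ∀ _ : Fin n, SU2) : ∀ _ : Fin n, SU2 :=
  fun k => ⟨star (U k : Matrix (Fin 2) (Fin 2) ℂ), star_mem_SU (U k)⟩

lemma actLU_left_inv (U : ∀ _ : Fin n, SU2) (ψ : QState n) :
    actLU (SUinv U) (actLU U ψ) = ψ := by
  rw [actLU_eq_genAct, actLU_eq_genAct, genAct_comp]
  have : (fun k => ((SUinv U k : Matrix (Fin 2) (Fin 2) ℂ)) * (U k : Matrix (Fin 2) (Fin 2) ℂ))
      = fun _ => (1 : Matrix (Fin 2) (Fin 2) ℂ) := by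
    funext k
    exact SU_star_mul_self (U k)
  rw [this, genAct_one]

lemma actLU_right_inv (U : ∀ _ : Fin n, SU2) (ψ : QState n) :
    actLU U (actLU (SUinv U) ψ) = ψ := by
  rw [actLU_eq_genAct, actLU_eq_genAct, genAct_comp]
  have : (fun k => ((U k : Matrix (Fin 2) (Fin 2) ℂ)) * ((SUinv U k : Matrix (Fin 2) (Fin 2) ℂ)))
      = fun _ => (1 : Matrix (Fin 2) (Fin 2) ℂ) := by
    funext k
    exact SU_mul_star_self (U k)
  rw [this, genAct_one]

/-- `actLU U` as an `ℝ`-linear map. -/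
noncomputable def LUmap (U : ∀ _ : Fin n, SU2) : QState n →ₗ[ℝ] QState n where
  toFun := actLU U
  map_add' ψ χ := by
    funext I
    unfold actLU
    rw [Pi.add_apply, ← Finset.sum_add_distrib]
    refine Finset.sum_congr rfl fun J _ => ?_
    rw [Pi.add_apply]
    ring
  map_smul' r ψ := by
    funext I
    unfold actLU
    simp only [Pi.smul_apply, Finset.smul_sum, RingHom.id_apply, Complex.real_smul]
    refine Finset.sum_congr rfl fun J _ => ?_
    ring

lemma LUmap_apply (U : ∀ _ : Fin n, SU2) (ψ : QState n) : LUmap U ψ = actLU U ψ := rfl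

/-- Single-site unitaries act as `Pop`. -/
lemma actLU_single (k : Fin n) (W : SU2) (ψ : QState n) :
    actLU (fun m => if m = k then W else 1) ψ = Pop (W : Matrix (Fin 2) (Fin 2) ℂ) k ψ := by
  rw [actLU_eq_genAct]
  rw [show (fun m => (((if m = k then W else 1 : SU2)) : Matrix (Fin 2) (Fin 2) ℂ))
      = fun m => if m = k then (W : Matrix (Fin 2) (Fin 2) ℂ) else 1 by
    funext m; split <;> rfl]
  exact genAct_single k _ ψ

/-- The key exchange identity. -/
lemma Pop_actLU (M : Matrix (Fin 2) (Fin 2) ℂ) (k : Fin n) (U : ∀ _ : Fin n, SU2) (ψ : QState n) :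
    Pop M k (actLU U ψ)
      = actLU U (Pop (star (U k : Matrix (Fin 2) (Fin 2) ℂ) * M * (U k : Matrix (Fin 2) (Fin 2) ℂ)) k ψ) := by
  have htup : (fun m => (if m = k then M else 1) * (U m : Matrix (Fin 2) (Fin 2) ℂ))
      = (fun m => (U m : Matrix (Fin 2) (Fin 2) ℂ) *
          (if m = k then star (U k : Matrix (Fin 2) (Fin 2) ℂ) * M * (U k : Matrix (Fin 2) (Fin 2) ℂ) else 1)) := by
    funext m
    rcases eq_or_ne m k with rfl | hm
    · simp [← Matrix.mul_assoc, SU_mul_star_self (U m)]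
    · simp [hm]
  calc Pop M k (actLU U ψ)
      = genAct (fun m => (if m = k then M else 1) * (U m : Matrix (Fin 2) (Fin 2) ℂ)) ψ := by
        rw [← genAct_single k M (actLU U ψ), actLU_eq_genAct]
        exact genAct_comp _ _ ψ
    _ = genAct (fun m => (U m : Matrix (Fin 2) (Fin 2) ℂ) *
          (if m = k then star (U k : Matrix (Fin 2) (Fin 2) ℂ) * M * (U k : Matrix (Fin 2) (Fin 2) ℂ) else 1)) ψ := by
        rw [htup]
    _ = actLU U (Pop (star (U k : Matrix (Fin 2) (Fin 2) ℂ) * M * (U k : Matrix (Fin 2) (Fin 2) ℂ)) k ψ) := by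
        rw [actLU_eq_genAct, ← genAct_single k (star (U k : Matrix (Fin 2) (Fin 2) ℂ) * M * (U k : Matrix (Fin 2) (Fin 2) ℂ)) ψ]
        exact (genAct_comp _ _ ψ).symm

end Stage6
section Stage7
open Complex Matrix

variable {n : ℕ}

def Py : Matrix (Fin 2) (Fin 2) ℂ := !![0, -Complex.I; Complex.I, 0]

lemma Pzx_eq : Pzx = Complex.I • Py := by
  unfold Pzx Py
  ext i j
  fin_cases i <;> fin_cases j <;> simp

lemma Pz_herm : Pzᴴ = Pz := by
  unfold Pz; ext i j; fin_cases i <;> fin_cases j <;> simp [Matrix.conjTranspose_apply]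

lemma Px_herm : Pxᴴ = Px := by
  unfold Px; ext i j; fin_cases i <;> fin_cases j <;> simp [Matrix.conjTranspose_apply]

lemma Py_herm : Pyᴴ = Py := by
  unfold Py; ext i j; fin_cases i <;> fin_cases j <;> simp [Matrix.conjTranspose_apply]

lemma Pz_tr : Pz 1 1 = - Pz 0 0 := by unfold Pz; simp
lemma Px_tr : Px 1 1 = - Px 0 0 := by unfold Px; simp
lemma Py_tr : Py 1 1 = - Py 0 0 := by unfold Py; simp

lemma conj_herm (V : SU2) (Q : Matrix (Fin 2) (Fin 2) ℂ) (hH : Qᴴ = Q) :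
    (star (V : Matrix (Fin 2) (Fin 2) ℂ) * Q * (V : Matrix (Fin 2) (Fin 2) ℂ))ᴴ
      = star (V : Matrix (Fin 2) (Fin 2) ℂ) * Q * (V : Matrix (Fin 2) (Fin 2) ℂ) := by
  rw [Matrix.conjTranspose_mul, Matrix.conjTranspose_mul, hH]
  rw [Matrix.star_eq_conjTranspose, Matrix.conjTranspose_conjTranspose]
  rw [Matrix.mul_assoc]

lemma conj_tr (V : SU2) (Q : Matrix (Fin 2) (Fin 2) ℂ) (htr : Q 1 1 = - Q 0 0) :
    (star (V : Matrix (Fin 2) (Fin 2) ℂ) * Q * (V : Matrix (Fin 2) (Fin 2) ℂ)) 1 1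
      = - (star (V : Matrix (Fin 2) (Fin 2) ℂ) * Q * (V : Matrix (Fin 2) (Fin 2) ℂ)) 0 0 := by
  have h1 : (star (V : Matrix (Fin 2) (Fin 2) ℂ) * Q * (V : Matrix (Fin 2) (Fin 2) ℂ)).trace = Q.trace := by
    rw [Matrix.trace_mul_cycle]
    rw [SU_mul_star_self V, Matrix.one_mul]
  rw [Matrix.trace_fin_two, Matrix.trace_fin_two] at h1
  rw [htr] at h1
  linear_combination h1

lemma IQ_conj (V : SU2) (Q : Matrix (Fin 2) (Fin 2) ℂ) :
    star (V : Matrix (Fin 2) (Fin 2) ℂ) * (Complex.I • Q) * (V : Matrix (Fin 2) (Fin 2) ℂ)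
      = Complex.I • (star (V : Matrix (Fin 2) (Fin 2) ℂ) * Q * (V : Matrix (Fin 2) (Fin 2) ℂ)) := by
  rw [Matrix.mul_smul, Matrix.smul_mul]

lemma combo_mem_span (k : Fin n) (ψ : QState n) (x y z : ℝ) :
    z • Aop k ψ + y • Bop k ψ + x • Cop k ψ ∈ Submodule.span ℝ (triple k ψ) := by
  refine Submodule.add_mem _ (Submodule.add_mem _ ?_ ?_) ?_
  · exact Submodule.smul_mem _ _ (Submodule.subset_span (Set.mem_insert _ _))
  · exact Submodule.smul_mem _ _ (Submodule.subset_span (Set.mem_insert_of_mem _ (Set.mem_insert _ _)))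
  · exact Submodule.smul_mem _ _ (Submodule.subset_span (Set.mem_insert_of_mem _ (Set.mem_insert_of_mem _ rfl)))

lemma pauli_gen_mem (k : Fin n) (U : ∀ _ : Fin n, SU2) (ψ : QState n)
    (Q : Matrix (Fin 2) (Fin 2) ℂ) (hH : Qᴴ = Q) (htr : Q 1 1 = - Q 0 0) :
    Pop (Complex.I • Q) k (actLU U ψ) ∈
      Submodule.map (LUmap U) (Submodule.span ℝ (triple k ψ)) := by
  rw [Pop_actLU, IQ_conj]
  obtain ⟨x, y, z, hdec⟩ := Pop_herm_decomp
    (star (U k : Matrix (Fin 2) (Fin 2) ℂ) * Q * (U k : Matrix (Fin 2) (Fin 2) ℂ))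
    (conj_herm (U k) Q hH) (conj_tr (U k) Q htr)
  rw [hdec k ψ]
  exact Submodule.mem_map_of_mem (combo_mem_span k ψ x y z)

lemma triple_span_le (U : ∀ _ : Fin n, SU2) (k : Fin n) (ψ : QState n) :
    Submodule.span ℝ (triple k (actLU U ψ))
      ≤ Submodule.map (LUmap U) (Submodule.span ℝ (triple k ψ)) := by
  rw [Submodule.span_le]
  intro v hv
  simp only [triple, Set.mem_insert_iff, Set.mem_singleton_iff] at hv
  rcases hv with rfl | rfl | rfl
  · rw [Aop_eq_Pop]; exact pauli_gen_mem k U ψ Pz Pz_herm Pz_tr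
  · rw [Bop_eq_Pop, Pzx_eq]; exact pauli_gen_mem k U ψ Py Py_herm Py_tr
  · rw [Cop_eq_Pop]; exact pauli_gen_mem k U ψ Px Px_herm Px_tr

lemma LUcomp_id (U : ∀ _ : Fin n, SU2) :
    (LUmap U).comp (LUmap (SUinv U)) = LinearMap.id :=
  LinearMap.ext fun χ => actLU_right_inv U χ

lemma triple_span_eq (U : ∀ _ : Fin n, SU2) (k : Fin n) (ψ : QState n) :
    Submodule.span ℝ (triple k (actLU U ψ))
      = Submodule.map (LUmap U) (Submodule.span ℝ (triple k ψ)) := by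
  refine le_antisymm (triple_span_le U k ψ) ?_
  have h1 := triple_span_le (SUinv U) k (actLU U ψ)
  rw [actLU_left_inv] at h1
  have h2 := Submodule.map_mono (f := LUmap U) h1
  rwa [← Submodule.map_comp, LUcomp_id, Submodule.map_id] at h2

/-- `actLU U` as an `ℝ`-linear equivalence. -/
noncomputable def LUequiv (U : ∀ _ : Fin n, SU2) : QState n ≃ₗ[ℝ] QState n :=
  LinearEquiv.ofLinear (LUmap U) (LUmap (SUinv U))
    (LinearMap.ext fun χ => actLU_right_inv U χ)
    (LinearMap.ext fun χ => actLU_left_inv U χ)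

lemma rdim_union_actLU (U : ∀ _ : Fin n, SU2) (l l' : Fin n) (ψ : QState n) :
    rdim (triple l (actLU U ψ) ∪ triple l' (actLU U ψ)) = rdim (triple l ψ ∪ triple l' ψ) := by
  unfold rdim
  rw [Submodule.span_union, Submodule.span_union, triple_span_eq, triple_span_eq,
    ← Submodule.map_sup]
  have : LUmap U = ((LUequiv U : QState n ≃ₗ[ℝ] QState n) : QState n →ₗ[ℝ] QState n) := rfl
  rw [this]
  exact LinearEquiv.finrank_map_eq (LUequiv U) _

end Stage7
section Stage8
open Complex

variable {n : ℕ}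

/-- The singlet-times-factor state. -/
def sChi (l l' : Fin n) (φ : QState n) : QState n :=
  fun I => (if I l = I l' then (1 : ℂ) else 0) * φ I

lemma flip_noteq {k m : Fin n} (h : m ≠ k) (I : Fin n → Fin 2) : flipBit k I m = I m :=
  Function.update_of_ne h _ I

lemma sChi_A (l l' : Fin n) (hne : l ≠ l') (φ : QState n) :
    Aop l' (sChi l l' φ) = Aop l (sChi l l' φ) := by
  funext I
  unfold Aop sChi
  rcases eq_or_ne (I l) (I l') with h | h
  · rw [← h]
  · rw [if_neg h]
    ring

lemma sChi_BC (l l' : Fin n) (hne : l ≠ l') (φ : QState n)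
    (hφl : ∀ I b, φ (Function.update I l b) = φ I)
    (hφl' : ∀ I b, φ (Function.update I l' b) = φ I) :
    Bop l' (sChi l l' φ) = (-1 : ℝ) • Bop l (sChi l l' φ)
      ∧ Cop l' (sChi l l' φ) = Cop l (sChi l l' φ) := by
  have key : ∀ I : Fin n → Fin 2, sChi l l' φ (flipBit l' I)
      = (if I l = 1 - I l' then (1:ℂ) else 0) * φ I := by
    intro I
    unfold sChi
    rw [flip_noteq hne I, flip_apply_self]
    unfold flipBit
    rw [hφl']
  have key2 : ∀ I : Fin n → Fin 2, sChi l l' φ (flipBit l I)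
      = (if 1 - I l = I l' then (1:ℂ) else 0) * φ I := by
    intro I
    unfold sChi
    rw [flip_noteq (Ne.symm hne) I, flip_apply_self]
    unfold flipBit
    rw [hφl]
  constructor
  · funext I
    unfold Bop
    simp only [Pi.smul_apply]
    rw [key, key2]
    rcases fin2cases (I l) with h | h <;> rcases fin2cases (I l') with h' | h' <;>
      rw [h, h'] <;> norm_num
  · funext I
    unfold Cop
    rw [key, key2]
    rcases fin2cases (I l) with h | h <;> rcases fin2cases (I l') with h' | h' <;>
      rw [h, h'] <;> norm_num

lemma rdim_union_sChi {l l' : Fin n} (hne : l ≠ l') {φ : QState n}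
    (hφl : ∀ I b, φ (Function.update I l b) = φ I)
    (hφl' : ∀ I b, φ (Function.update I l' b) = φ I)
    (hχ : sChi l l' φ ≠ 0) :
    rdim (triple l (sChi l l' φ) ∪ triple l' (sChi l l' φ)) = 3 := by
  obtain ⟨hB, hC⟩ := sChi_BC l l' hne φ hφl hφl'
  have hsub : Submodule.span ℝ (triple l' (sChi l l' φ))
      ≤ Submodule.span ℝ (triple l (sChi l l' φ)) := by
    rw [Submodule.span_le]
    intro v hv
    simp only [triple, Set.mem_insert_iff, Set.mem_singleton_iff] at hv
    rcases hv with rfl | rfl | rfl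
    · rw [sChi_A l l' hne φ]
      exact Submodule.subset_span (Set.mem_insert _ _)
    · rw [hB]
      exact Submodule.smul_mem _ _
        (Submodule.subset_span (Set.mem_insert_of_mem _ (Set.mem_insert _ _)))
    · rw [hC]
      exact Submodule.subset_span (Set.mem_insert_of_mem _ (Set.mem_insert_of_mem _ rfl))
  have : rdim (triple l (sChi l l' φ) ∪ triple l' (sChi l l' φ))
      = rdim (triple l (sChi l l' φ)) := by
    unfold rdim
    rw [Submodule.span_union]
    rw [sup_eq_left.mpr hsub]
  rw [this]
  exact rdim_triple hχ

/-- Backward direction of the main theorem. -/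
lemma backward_dir {ψ : QState n} (hψ : ψ ≠ 0) {l l' : Fin n} (hne : l ≠ l')
    {φ : QState n}
    (hφl : ∀ I b, φ (Function.update I l b) = φ I)
    (hφl' : ∀ I b, φ (Function.update I l' b) = φ I)
    {U : ∀ _ : Fin n, SU2} (hU : actLU U ψ = sChi l l' φ) :
    rdim (triple l ψ ∪ triple l' ψ) = 3 := by
  have hχ : sChi l l' φ ≠ 0 := by
    intro h0
    apply hψ
    have h1 := actLU_left_inv U ψ
    rw [hU, h0] at h1
    rw [← h1]
    exact map_zero (LUmap (SUinv U))
  have h2 := rdim_union_actLU U l l' ψ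
  rw [hU] at h2
  rw [← h2]
  exact rdim_union_sChi hne hφl hφl' hχ

end Stage8
section Stage9
open Complex Matrix

variable {n : ℕ}

def upd2 (l l' : Fin n) (I : Fin n → Fin 2) (i j : Fin 2) : Fin n → Fin 2 :=
  Function.update (Function.update I l i) l' j

def Cmat (l l' : Fin n) (ψ : QState n) (I : Fin n → Fin 2) : Matrix (Fin 2) (Fin 2) ℂ :=
  Matrix.of fun i j => ψ (upd2 l l' I i j)

variable {l l' : Fin n}

lemma upd2_l (hne : l ≠ l') (I : Fin n → Fin 2) (i j : Fin 2) : upd2 l l' I i j l = i := by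
  unfold upd2
  rw [Function.update_of_ne hne, Function.update_self]

lemma upd2_l' (I : Fin n → Fin 2) (i j : Fin 2) : upd2 l l' I i j l' = j :=
  Function.update_self _ _ _

lemma flip_l_upd2 (hne : l ≠ l') (I : Fin n → Fin 2) (i j : Fin 2) :
    flipBit l (upd2 l l' I i j) = upd2 l l' I (1 - i) j := by
  unfold flipBit
  rw [upd2_l hne]
  unfold upd2
  rw [Function.update_comm (Ne.symm hne), Function.update_idem]

lemma flip_l'_upd2 (I : Fin n → Fin 2) (i j : Fin 2) :
    flipBit l' (upd2 l l' I i j) = upd2 l l' I i (1 - j) := by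
  unfold flipBit upd2
  rw [Function.update_self, Function.update_idem]

lemma upd2_self (I : Fin n → Fin 2) : upd2 l l' I (I l) (I l') = I := by
  unfold upd2
  rw [Function.update_eq_self l I, Function.update_eq_self l' I]

lemma Cmat_update_l (ψ : QState n) (I : Fin n → Fin 2) (b : Fin 2) :
    Cmat l l' ψ (Function.update I l b) = Cmat l l' ψ I := by
  ext i j
  show ψ (upd2 l l' (Function.update I l b) i j) = ψ (upd2 l l' I i j)
  unfold upd2
  rw [Function.update_idem]

lemma Cmat_update_l' (hne : l ≠ l') (ψ : QState n) (I : Fin n → Fin 2) (b : Fin 2) :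
    Cmat l l' ψ (Function.update I l' b) = Cmat l l' ψ I := by
  ext i j
  show ψ (upd2 l l' (Function.update I l' b) i j) = ψ (upd2 l l' I i j)
  unfold upd2
  rw [Function.update_comm (Ne.symm hne), Function.update_idem]

lemma relZ_entry (hne : l ≠ l') {ψ : QState n} {a₁ a₂ a₃ : ℝ}
    (hA : Aop l' ψ = a₁ • Aop l ψ + a₂ • Bop l ψ + a₃ • Cop l ψ)
    (I : Fin n → Fin 2) (p q : Fin 2) :
    Complex.I * (-1:ℂ)^(q:ℕ) * Cmat l l' ψ I p q
      = (a₁:ℂ) * (Complex.I * (-1:ℂ)^(p:ℕ) * Cmat l l' ψ I p q)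
        + (a₂:ℂ) * ((-1:ℂ)^(p:ℕ) * Cmat l l' ψ I (1-p) q)
        + (a₃:ℂ) * (Complex.I * Cmat l l' ψ I (1-p) q) := by
  have h := congrFun hA (upd2 l l' I p q)
  simp only [Aop, Bop, Cop, Pi.add_apply, Pi.smul_apply, smul_eq_mul, Complex.real_smul] at h
  rw [upd2_l hne, upd2_l', flip_l_upd2 hne] at h
  exact h

lemma relX_entry (hne : l ≠ l') {ψ : QState n} {c₁ c₂ c₃ : ℝ}
    (hC : Cop l' ψ = c₁ • Aop l ψ + c₂ • Bop l ψ + c₃ • Cop l ψ)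
    (I : Fin n → Fin 2) (p q : Fin 2) :
    Complex.I * Cmat l l' ψ I p (1-q)
      = (c₁:ℂ) * (Complex.I * (-1:ℂ)^(p:ℕ) * Cmat l l' ψ I p q)
        + (c₂:ℂ) * ((-1:ℂ)^(p:ℕ) * Cmat l l' ψ I (1-p) q)
        + (c₃:ℂ) * (Complex.I * Cmat l l' ψ I (1-p) q) := by
  have h := congrFun hC (upd2 l l' I p q)
  simp only [Aop, Bop, Cop, Pi.add_apply, Pi.smul_apply, smul_eq_mul, Complex.real_smul] at h
  rw [upd2_l hne, flip_l_upd2 hne, flip_l'_upd2] at h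
  exact h

/-- The coefficient matrix `z·iσz + y·σzσx + x·iσx`. -/
def Nmat (x y z : ℝ) : Matrix (Fin 2) (Fin 2) ℂ :=
  !![(z:ℂ) * Complex.I, (y:ℂ) + (x:ℂ) * Complex.I;
     -(y:ℂ) + (x:ℂ) * Complex.I, -(z:ℂ) * Complex.I]

lemma Nmat_antiherm (x y z : ℝ) : (Nmat x y z)ᴴ = -(Nmat x y z) := by
  unfold Nmat
  ext p q
  fin_cases p <;> fin_cases q <;>
    simp [Matrix.conjTranspose_apply, Complex.ext_iff]

lemma matrelZ (hne : l ≠ l') {ψ : QState n} {a₁ a₂ a₃ : ℝ}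
    (hA : Aop l' ψ = a₁ • Aop l ψ + a₂ • Bop l ψ + a₃ • Cop l ψ) (I : Fin n → Fin 2) :
    Cmat l l' ψ I * (Complex.I • Pz) = Nmat a₃ a₂ a₁ * Cmat l l' ψ I := by
  ext p q
  rw [Matrix.mul_apply, Matrix.mul_apply, Fin.sum_univ_two, Fin.sum_univ_two]
  fin_cases p <;> fin_cases q
  · have h := relZ_entry hne hA I 0 0
    norm_num at h ⊢
    simp [Pz, Nmat]
    linear_combination h
  · have h := relZ_entry hne hA I 0 1
    norm_num at h ⊢
    simp [Pz, Nmat]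
    linear_combination h
  · have h := relZ_entry hne hA I 1 0
    norm_num at h ⊢
    simp [Pz, Nmat]
    linear_combination h
  · have h := relZ_entry hne hA I 1 1
    norm_num at h ⊢
    simp [Pz, Nmat]
    linear_combination h

lemma matrelX (hne : l ≠ l') {ψ : QState n} {c₁ c₂ c₃ : ℝ}
    (hC : Cop l' ψ = c₁ • Aop l ψ + c₂ • Bop l ψ + c₃ • Cop l ψ) (I : Fin n → Fin 2) :
    Cmat l l' ψ I * (Complex.I • Px) = Nmat c₃ c₂ c₁ * Cmat l l' ψ I := by
  ext p q
  rw [Matrix.mul_apply, Matrix.mul_apply, Fin.sum_univ_two, Fin.sum_univ_two]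
  fin_cases p <;> fin_cases q
  · have h := relX_entry hne hC I 0 0
    norm_num at h ⊢
    simp [Px, Nmat]
    linear_combination h
  · have h := relX_entry hne hC I 0 1
    norm_num at h ⊢
    simp [Px, Nmat]
    linear_combination h
  · have h := relX_entry hne hC I 1 0
    norm_num at h ⊢
    simp [Px, Nmat]
    linear_combination h
  · have h := relX_entry hne hC I 1 1
    norm_num at h ⊢
    simp [Px, Nmat]
    linear_combination h

lemma comm_of_rel {P Nm : Matrix (Fin 2) (Fin 2) ℂ} (hP : Pᴴ = P) (hanti : Nmᴴ = -Nm)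
    {C C' : Matrix (Fin 2) (Fin 2) ℂ}
    (hrel : C * (Complex.I • P) = Nm * C) (hrel' : C' * (Complex.I • P) = Nm * C') :
    P * (C'ᴴ * C) = (C'ᴴ * C) * P := by
  have h1 : (Complex.I • P) * C'ᴴ = C'ᴴ * Nm := by
    have h2 := congrArg Matrix.conjTranspose hrel'
    rw [Matrix.conjTranspose_mul, Matrix.conjTranspose_mul, hanti,
      Matrix.conjTranspose_smul, hP] at h2
    have h3 : star Complex.I • P * C'ᴴ = -((Complex.I • P) * C'ᴴ) := by
      rw [Complex.star_def, Complex.conj_I]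
      simp [Matrix.smul_mul]
    rw [h3] at h2
    have h4 : C'ᴴ * -Nm = -(C'ᴴ * Nm) := by simp
    rw [h4] at h2
    exact neg_injective h2
  have h5 : (Complex.I • P) * (C'ᴴ * C) = (C'ᴴ * C) * (Complex.I • P) := by
    calc (Complex.I • P) * (C'ᴴ * C) = ((Complex.I • P) * C'ᴴ) * C := by rw [Matrix.mul_assoc]
      _ = (C'ᴴ * Nm) * C := by rw [h1]
      _ = C'ᴴ * (Nm * C) := by rw [Matrix.mul_assoc]
      _ = C'ᴴ * (C * (Complex.I • P)) := by rw [hrel]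
      _ = (C'ᴴ * C) * (Complex.I • P) := by rw [Matrix.mul_assoc]
  have h6 : Complex.I • (P * (C'ᴴ * C)) = Complex.I • ((C'ᴴ * C) * P) := by
    rw [← Matrix.smul_mul, ← Matrix.mul_smul]
    exact h5
  exact smul_right_injective (Matrix (Fin 2) (Fin 2) ℂ) Complex.I_ne_zero h6

lemma scalar_of_comm (D : Matrix (Fin 2) (Fin 2) ℂ) (hz : Pz * D = D * Pz)
    (hx : Px * D = D * Px) : D = D 0 0 • (1 : Matrix (Fin 2) (Fin 2) ℂ) := by
  have ez := Matrix.ext_iff.mpr hz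
  have ex := Matrix.ext_iff.mpr hx
  have e1 := ez 0 1
  have e2 := ez 1 0
  have e3 := ex 0 1
  simp [Matrix.mul_apply, Fin.sum_univ_two, Pz, Px] at e1 e2 e3
  ext p q
  fin_cases p <;> fin_cases q <;>
    simp [Matrix.smul_apply, Matrix.one_apply]
  · linear_combination (1/2 : ℂ) * e1
  · linear_combination (-1/2 : ℂ) * e2
  · linear_combination e3

end Stage9
section Stage10
open Complex Matrix

variable {n : ℕ} {l l' : Fin n}

lemma conj_self_add_eq_zero {z w : ℂ}
    (h : (starRingEnd ℂ) z * z + (starRingEnd ℂ) w * w = 0) : z = 0 ∧ w = 0 := by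
  have h1 : ((Complex.normSq z + Complex.normSq w : ℝ) : ℂ) = 0 := by
    rw [Complex.ofReal_add, Complex.normSq_eq_conj_mul_self, Complex.normSq_eq_conj_mul_self]
    exact h
  have h2 : Complex.normSq z + Complex.normSq w = 0 := by exact_mod_cast h1
  have h3 : Complex.normSq z = 0 ∧ Complex.normSq w = 0 := by
    constructor <;> nlinarith [Complex.normSq_nonneg z, Complex.normSq_nonneg w]
  exact ⟨Complex.normSq_eq_zero.mp h3.1, Complex.normSq_eq_zero.mp h3.2⟩

lemma forward_dir {ψ : QState n} (hψ : ψ ≠ 0) (hne : l ≠ l')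
    {a₁ a₂ a₃ c₁ c₂ c₃ : ℝ}
    (hA : Aop l' ψ = a₁ • Aop l ψ + a₂ • Bop l ψ + a₃ • Cop l ψ)
    (hC : Cop l' ψ = c₁ • Aop l ψ + c₂ • Bop l ψ + c₃ • Cop l ψ) :
    ∃ φ : QState n,
      (∀ (I : Fin n → Fin 2) (b : Fin 2), φ (Function.update I l b) = φ I) ∧
      (∀ (I : Fin n → Fin 2) (b : Fin 2), φ (Function.update I l' b) = φ I) ∧
      LUEquiv ψ (sChi l l' φ) := by
  classical
  have hscal : ∀ I' I : Fin n → Fin 2, (Cmat l l' ψ I')ᴴ * Cmat l l' ψ I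
      = ((Cmat l l' ψ I')ᴴ * Cmat l l' ψ I) 0 0 • 1 := by
    intro I' I
    apply scalar_of_comm
    · exact comm_of_rel Pz_herm (Nmat_antiherm a₃ a₂ a₁) (matrelZ hne hA I) (matrelZ hne hA I')
    · exact comm_of_rel Px_herm (Nmat_antiherm c₃ c₂ c₁) (matrelX hne hC I) (matrelX hne hC I')
  obtain ⟨I₀, hI₀⟩ := Function.ne_iff.mp hψ
  set C₀ := Cmat l l' ψ I₀ with hC₀def
  have hval : C₀ (I₀ l) (I₀ l') = ψ I₀ := by
    show ψ (upd2 l l' I₀ (I₀ l) (I₀ l')) = ψ I₀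
    rw [upd2_self]
  have hC₀ne : C₀ ≠ 0 := by
    intro h0
    rw [h0] at hval
    exact hI₀ (by simpa using hval.symm)
  set lam0 : ℂ := (C₀ᴴ * C₀) 0 0 with hlam0def
  have hD0 : C₀ᴴ * C₀ = lam0 • 1 := hscal I₀ I₀
  have hdiag : ∀ q : Fin 2, (C₀ᴴ * C₀) q q
      = (starRingEnd ℂ) (C₀ 0 q) * C₀ 0 q + (starRingEnd ℂ) (C₀ 1 q) * C₀ 1 q := by
    intro q
    rw [Matrix.mul_apply, Fin.sum_univ_two, Matrix.conjTranspose_apply,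
      Matrix.conjTranspose_apply]
    simp [Complex.star_def]
  have hlam_ne : lam0 ≠ 0 := by
    intro h0
    have hzero : C₀ᴴ * C₀ = 0 := by rw [hD0, h0, zero_smul]
    apply hC₀ne
    have hcol : ∀ q : Fin 2, C₀ 0 q = 0 ∧ C₀ 1 q = 0 := by
      intro q
      apply conj_self_add_eq_zero
      rw [← hdiag q, hzero]
      rfl
    ext p q
    fin_cases p
    · exact (hcol q).1.trans (by simp)
    · exact (hcol q).2.trans (by simp)
  -- lam0 as a real number
  set lamr : ℝ := Complex.normSq (C₀ 0 0) + Complex.normSq (C₀ 1 0) with hlamrdef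
  have hlam_real : lam0 = (lamr : ℂ) := by
    rw [hlam0def, hdiag 0, hlamrdef, Complex.ofReal_add,
      Complex.normSq_eq_conj_mul_self, Complex.normSq_eq_conj_mul_self]
  have hlamr_pos : 0 < lamr := by
    rcases lt_or_eq_of_le (add_nonneg (Complex.normSq_nonneg _) (Complex.normSq_nonneg _) : (0:ℝ) ≤ lamr) with h | h
    · exact h
    · exfalso; apply hlam_ne; rw [hlam_real, hlamrdef, ← h]; simp
  -- determinant
  have hdet2 : star C₀.det * C₀.det = lam0 ^ 2 := by
    have h1 := congrArg Matrix.det hD0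
    rw [Matrix.det_mul, Matrix.det_conjTranspose, Matrix.det_smul, Matrix.det_one] at h1
    simpa using h1
  have hdet_ne : C₀.det ≠ 0 := by
    intro h0
    rw [h0, mul_zero] at hdet2
    exact hlam_ne (sq_eq_zero_iff.mp hdet2.symm)
  obtain ⟨ω, hω⟩ := IsAlgClosed.exists_pow_nat_eq C₀.det (n := 2) (by norm_num)
  have hω_ne : ω ≠ 0 := by
    intro h0
    rw [h0] at hω
    exact hdet_ne (by simpa using hω.symm)
  have hnormd : Complex.normSq C₀.det = lamr ^ 2 := by
    have hdet2' := hdet2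
    rw [Complex.star_def, ← Complex.normSq_eq_conj_mul_self, hlam_real] at hdet2'
    have h1 : ((Complex.normSq C₀.det : ℝ) : ℂ) = ((lamr ^ 2 : ℝ) : ℂ) := by
      rw [hdet2']
      push_cast
      ring
    exact_mod_cast h1
  have hnormω : Complex.normSq ω = lamr := by
    have h1 : Complex.normSq ω ^ 2 = lamr ^ 2 := by
      rw [← hnormd, ← hω, map_pow]
    nlinarith [Complex.normSq_nonneg ω, hlamr_pos]
  have hstarωω : star ω * ω = lam0 := by
    rw [hlam_real, ← hnormω, Complex.star_def, ← Complex.normSq_eq_conj_mul_self]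
  -- the unitary
  set W : Matrix (Fin 2) (Fin 2) ℂ := ω⁻¹ • C₀ with hWdef
  have hstarW : star W = (star ω)⁻¹ • C₀ᴴ := by
    rw [hWdef, star_smul, Matrix.star_eq_conjTranspose]
    congr 1
    exact star_inv₀ ω
  have hWW : star W * W = 1 := by
    rw [hstarW, hWdef, Matrix.smul_mul, Matrix.mul_smul, hD0, smul_smul, smul_smul]
    have hsω : star ω ≠ 0 := star_ne_zero.mpr hω_ne
    have hco : (star ω)⁻¹ * ω⁻¹ * lam0 = 1 := by
      rw [← hstarωω]
      field_simp
    rw [hco, one_smul]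
  have hWdet : W.det = 1 := by
    rw [hWdef, Matrix.det_smul, ← hω, Fintype.card_fin, inv_pow,
      inv_mul_cancel₀ (pow_ne_zero 2 hω_ne)]
  have hWmem : W ∈ Matrix.specialUnitaryGroup (Fin 2) ℂ := by
    rw [Matrix.mem_specialUnitaryGroup_iff]
    exact ⟨Matrix.mem_unitaryGroup_iff'.mpr hWW, hWdet⟩
  set Wsu : SU2 := ⟨W, hWmem⟩ with hWsudef
  set Ws : SU2 := ⟨star W, star_mem_SU Wsu⟩ with hWsdef
  -- the proportionality
  have hD0' : C₀ * C₀ᴴ = lam0 • 1 := by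
    have hinv : (lam0⁻¹ • C₀ᴴ) * C₀ = 1 := by
      rw [Matrix.smul_mul, hD0, smul_smul, inv_mul_cancel₀ hlam_ne, one_smul]
    have h2 := mul_eq_one_comm.mp hinv
    calc C₀ * C₀ᴴ = lam0 • (C₀ * (lam0⁻¹ • C₀ᴴ)) := by
          rw [Matrix.mul_smul, smul_smul, mul_inv_cancel₀ hlam_ne, one_smul]
      _ = lam0 • 1 := by rw [h2]
  -- final computation
  refine ⟨fun I => ((C₀ᴴ * Cmat l l' ψ I) 0 0) / star ω, ?_, ?_, ?_⟩
  · intro I b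
    simp only
    rw [Cmat_update_l]
  · intro I b
    simp only
    rw [Cmat_update_l' hne]
  · refine ⟨fun m => if m = l then Ws else 1, ?_⟩
    rw [actLU_single l Ws ψ]
    funext I
    have hcol : ∀ j, ψ (Function.update I l j) = Cmat l l' ψ I j (I l') := by
      intro j
      show _ = ψ (upd2 l l' I j (I l'))
      congr 1
      unfold upd2
      have h5 : (Function.update I l j) l' = I l' := Function.update_of_ne (Ne.symm hne) _ _
      rw [← h5, Function.update_eq_self]
    have hPop : Pop (Ws : Matrix (Fin 2) (Fin 2) ℂ) l ψ I
        = (star W * Cmat l l' ψ I) (I l) (I l') := by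
      unfold Pop
      rw [Matrix.mul_apply]
      refine Finset.sum_congr rfl fun j _ => ?_
      rw [hcol j]
    have hkey : star W * Cmat l l' ψ I
        = (((C₀ᴴ * Cmat l l' ψ I) 0 0) / star ω) • 1 := by
      rw [hstarW, Matrix.smul_mul, hscal I₀ I, smul_smul]
      congr 1
      simp [Matrix.smul_apply, Matrix.one_apply, div_eq_mul_inv, mul_comm]
    rw [hPop, hkey]
    unfold sChi
    simp only [Matrix.smul_apply, Matrix.one_apply]
    rcases eq_or_ne (I l) (I l') with h | h <;> simp [h]

end Stage10
/-- Two triples span exactly three dimensions if and only if the state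
factors as a product of a singlet `|00⟩ + |11⟩` in qubits `l, l'` times a state in
the remaining qubits (up to local unitary equivalence).  The factor `φ` in the
remaining qubits is encoded as a coefficient function not depending on the bits at
positions `l` and `l'`. -/
theorem two_triples_span_three_iff_singlet_factor {n : ℕ} (ψ : QState n) (hψ : ψ ≠ 0)
    (l l' : Fin n) (hll' : l < l') :
    rdim (triple l ψ ∪ triple l' ψ) = 3 ↔
      ∃ φ : QState n,
        (∀ (I : Fin n → Fin 2) (b : Fin 2), φ (Function.update I l b) = φ I) ∧
        (∀ (I : Fin n → Fin 2) (b : Fin 2), φ (Function.update I l' b) = φ I) ∧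
        LUEquiv ψ (fun I => (if I l = I l' then (1 : ℂ) else 0) * φ I) := by
  have hne : l ≠ l' := Fin.ne_of_lt hll'
  constructor
  · intro h3
    have hle : Submodule.span ℝ (triple l ψ) ≤ Submodule.span ℝ (triple l ψ ∪ triple l' ψ) :=
      Submodule.span_mono Set.subset_union_left
    have heq : Submodule.span ℝ (triple l ψ) = Submodule.span ℝ (triple l ψ ∪ triple l' ψ) := by
      apply Submodule.eq_of_le_of_finrank_le hle
      have h1 : Module.finrank ℝ (Submodule.span ℝ (triple l ψ)) = 3 := rdim_triple hψ
      have h2 : Module.finrank ℝ (Submodule.span ℝ (triple l ψ ∪ triple l' ψ)) = 3 := h3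
      rw [h2, h1]
    have hmemA : Aop l' ψ ∈ Submodule.span ℝ (triple l ψ) := by
      rw [heq]
      exact Submodule.subset_span (Set.mem_union_right _ (Set.mem_insert _ _))
    have hmemC : Cop l' ψ ∈ Submodule.span ℝ (triple l ψ) := by
      rw [heq]
      exact Submodule.subset_span (Set.mem_union_right _
        (Set.mem_insert_of_mem _ (Set.mem_insert_of_mem _ rfl)))
    rw [show triple l ψ = {Aop l ψ, Bop l ψ, Cop l ψ} from rfl] at hmemA hmemC
    obtain ⟨a₁, a₂, a₃, hA⟩ := mem_span_three hmemA
    obtain ⟨c₁, c₂, c₃, hC⟩ := mem_span_three hmemC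
    obtain ⟨φ, hp1, hp2, hp3⟩ := forward_dir hψ hne hA hC
    exact ⟨φ, hp1, hp2, hp3⟩
  · rintro ⟨φ, hφl, hφl', U, hU⟩
    exact backward_dir hψ hne hφl hφl' hU
end

section
/- Two singlet products are local unitary equivalent (up to a nonzero scalar) if and only if their perfect matchings of the qubits into entangled pairs are the same. More precisely, if ψ and ψ' are n-qubit singlet products corresponding to perfect matchings P and P' of {1,…,n} (each with the same leftover qubit when n is odd), then ψ is local unitary equivalent to a nonzero scalar multiple of ψ' if and only if P = P'. -/
section Aux

variable {n : ℕ}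

/-- `ψ` factorizes across the cut `{k,l}` vs the rest. -/
def ProdForm (k l : Fin n) (ψ : QState n) : Prop :=
  ∃ (φ : Fin 2 → Fin 2 → ℂ) (θ : ({t : Fin n // t ≠ k ∧ t ≠ l} → Fin 2) → ℂ),
    ∀ I, ψ I = φ (I k) (I l) * θ (fun t => I t.1)

lemma prod_split {M : Type*} [CommMonoid M] {k l : Fin n} (hkl : k ≠ l) (g : Fin n → M) :
    ∏ t : Fin n, g t = g k * (g l * ∏ t : {t : Fin n // t ≠ k ∧ t ≠ l}, g t.1) := by
  rw [← Finset.prod_subtype ((Finset.univ.erase k).erase l)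
      (p := fun t => t ≠ k ∧ t ≠ l) (fun x => by simp [and_comm]) g]
  rw [Finset.mul_prod_erase _ _ (Finset.mem_erase.mpr ⟨Ne.symm hkl, Finset.mem_univ l⟩)]
  rw [Finset.mul_prod_erase _ _ (Finset.mem_univ k)]

/-- Building a multi-index from values at `k`, `l`, and elsewhere. -/
def pairExt (k l : Fin n) (a b : Fin 2) (f : {t : Fin n // t ≠ k ∧ t ≠ l} → Fin 2) :
    Fin n → Fin 2 :=
  fun t => if h : t = k then a else if h' : t = l then b else f ⟨t, h, h'⟩

lemma pairExt_k (k l : Fin n) (a b f) : pairExt k l a b f k = a := by simp [pairExt]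

lemma pairExt_l {k l : Fin n} (hkl : k ≠ l) (a b f) : pairExt k l a b f l = b := by
  simp [pairExt, Ne.symm hkl]

lemma pairExt_other (k l : Fin n) (a b f) (t : {t : Fin n // t ≠ k ∧ t ≠ l}) :
    pairExt k l a b f t.1 = f t := by
  simp [pairExt, t.2.1, t.2.2]

def pairEquiv (k l : Fin n) (hkl : k ≠ l) :
    (Fin 2 × Fin 2 × ({t : Fin n // t ≠ k ∧ t ≠ l} → Fin 2)) ≃ (Fin n → Fin 2) where
  toFun x := pairExt k l x.1 x.2.1 x.2.2
  invFun J := (J k, J l, fun t => J t.1)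
  left_inv := fun ⟨a, b, f⟩ => by
    refine Prod.ext (pairExt_k ..) (Prod.ext (pairExt_l hkl ..) ?_)
    funext t
    exact pairExt_other ..
  right_inv J := by
    funext t
    show pairExt k l (J k) (J l) (fun t => J t.1) t = J t
    unfold pairExt
    split_ifs with h h'
    · rw [h]
    · rw [h']
    · rfl

lemma prodForm_smul {k l : Fin n} {ψ : QState n} (c : ℂ) (h : ProdForm k l ψ) :
    ProdForm k l (c • ψ) := by
  obtain ⟨φ, θ, hp⟩ := h
  exact ⟨fun x y => c * φ x y, θ, fun I => by simp [hp I]; ring⟩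

lemma prodForm_actLU {k l : Fin n} (hkl : k ≠ l)
    (U : ∀ _ : Fin n, Matrix.specialUnitaryGroup (Fin 2) ℂ) {ψ : QState n}
    (h : ProdForm k l ψ) : ProdForm k l (actLU U ψ) := by
  obtain ⟨φ, θ, hp⟩ := h
  refine ⟨fun x y => ∑ a : Fin 2, ∑ b : Fin 2,
      (U k : Matrix (Fin 2) (Fin 2) ℂ) x a * (U l : Matrix (Fin 2) (Fin 2) ℂ) y b * φ a b,
    fun f => ∑ g : ({t : Fin n // t ≠ k ∧ t ≠ l} → Fin 2),
      (∏ t : {t : Fin n // t ≠ k ∧ t ≠ l}, (U t.1 : Matrix (Fin 2) (Fin 2) ℂ) (f t) (g t)) * θ g,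
    ?_⟩
  intro I
  have key : actLU U ψ I = ∑ J : Fin n → Fin 2,
      (∏ t : Fin n, (U t : Matrix (Fin 2) (Fin 2) ℂ) (I t) (J t)) *
        (φ (J k) (J l) * θ (fun t => J t.1)) := by
    unfold actLU
    exact Finset.sum_congr rfl fun J _ => by rw [hp J]
  rw [key, ← Equiv.sum_comp (pairEquiv k l hkl) (fun J =>
      (∏ t : Fin n, (U t : Matrix (Fin 2) (Fin 2) ℂ) (I t) (J t)) *
        (φ (J k) (J l) * θ (fun t => J t.1)))]
  simp only [Fintype.sum_prod_type]
  simp only [Finset.sum_mul, Finset.mul_sum]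
  conv_rhs => rw [Finset.sum_comm]
  refine Finset.sum_congr rfl fun a _ => ?_
  conv_rhs => rw [Finset.sum_comm]
  refine Finset.sum_congr rfl fun b _ => ?_
  refine Finset.sum_congr rfl fun g _ => ?_
  show (∏ t : Fin n, (U t : Matrix (Fin 2) (Fin 2) ℂ) (I t) (pairEquiv k l hkl (a, b, g) t)) *
      (φ (pairEquiv k l hkl (a, b, g) k) (pairEquiv k l hkl (a, b, g) l) *
        θ (fun t => pairEquiv k l hkl (a, b, g) t.1)) = _
  have h1 : pairEquiv k l hkl (a, b, g) k = a := pairExt_k ..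
  have h2 : pairEquiv k l hkl (a, b, g) l = b := pairExt_l hkl ..
  have h3 : ∀ t : {t : Fin n // t ≠ k ∧ t ≠ l}, pairEquiv k l hkl (a, b, g) t.1 = g t :=
    fun t => pairExt_other k l a b g t
  rw [prod_split hkl, h1, h2]
  simp only [h3]
  ring


lemma prodForm_singlet {m : Fin n → Fin n} (hm : Function.Involutive m) {k l : Fin n}
    (hkl : k ≠ l) (hmk : m k = l) (χ : Fin 2 → ℂ) :
    ProdForm k l (singletProduct m χ) := by
  have hml : m l = k := by rw [← hmk]; exact hm k
  have hsub : ∀ t : Fin n, t ≠ k → t ≠ l → m t ≠ k ∧ m t ≠ l := by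
    intro t h1 h2
    constructor
    · intro h; apply h2; have ht := hm t; rw [h, hmk] at ht; exact ht.symm
    · intro h; apply h1; have ht := hm t; rw [h, hml] at ht; exact ht.symm
  refine ⟨fun x y => if x = y then 1 else 0,
    fun f => singletProduct m χ (pairExt k l 0 0 f), ?_⟩
  intro I
  set I' : Fin n → Fin 2 := pairExt k l 0 0 (fun t => I t.1) with hI'
  have hI'k : I' k = 0 := pairExt_k ..
  have hI'l : I' l = 0 := pairExt_l hkl ..
  have hI'o : ∀ t : Fin n, (h1 : t ≠ k) → (h2 : t ≠ l) → I' t = I t := fun t h1 h2 =>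
    pairExt_other k l 0 0 (fun t => I t.1) ⟨t, h1, h2⟩
  show singletProduct m χ I = (if I k = I l then (1:ℂ) else 0) * singletProduct m χ I'
  unfold singletProduct
  have hfixeq : ∀ t ∈ Finset.univ.filter (fun t => m t = t), χ (I' t) = χ (I t) := by
    intro t ht
    have hmt : m t = t := (Finset.mem_filter.mp ht).2
    have h1 : t ≠ k := by rintro rfl; exact hkl (hmt.symm.trans hmk)
    have h2 : t ≠ l := by rintro rfl; exact hkl (hml.symm.trans hmt)
    rw [hI'o t h1 h2]
  have e1 : ∏ t : Fin n, (if I t = I (m t) then (1:ℂ) else 0)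
      = (if I k = I l then (1:ℂ) else 0) * ((if I l = I k then (1:ℂ) else 0) *
          ∏ t : {t : Fin n // t ≠ k ∧ t ≠ l}, (if I t.1 = I (m t.1) then (1:ℂ) else 0)) := by
    rw [prod_split hkl (fun t => if I t = I (m t) then (1:ℂ) else 0), hmk, hml]
  have e2 : ∏ t : Fin n, (if I' t = I' (m t) then (1:ℂ) else 0)
      = ∏ t : {t : Fin n // t ≠ k ∧ t ≠ l}, (if I t.1 = I (m t.1) then (1:ℂ) else 0) := by
    rw [prod_split hkl (fun t => if I' t = I' (m t) then (1:ℂ) else 0), hmk, hml, hI'k, hI'l]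
    simp only [eq_self_iff_true, if_true, one_mul]
    refine Finset.prod_congr rfl fun t _ => ?_
    rw [hI'o t.1 t.2.1 t.2.2, hI'o (m t.1) (hsub t.1 t.2.1 t.2.2).1 (hsub t.1 t.2.1 t.2.2).2]
  rw [e1, e2, Finset.prod_congr rfl hfixeq]
  by_cases hc : I k = I l
  · simp [hc]
  · simp [hc]


lemma singlet_prodForm {m : Fin n → Fin n} (hm : Function.Involutive m) {k l : Fin n}
    (hkl : k ≠ l) (hk : m k ≠ k) {χ : Fin 2 → ℂ} (hχ : χ ≠ 0)
    (h : ProdForm k l (singletProduct m χ)) : m k = l := by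
  by_contra hne
  obtain ⟨a, ha⟩ : ∃ a, χ a ≠ 0 := Function.ne_iff.mp hχ
  obtain ⟨φ, θ, hp⟩ := h
  have hbx : ∀ x : Fin 2, 1 - x ≠ x := by decide
  set b : Fin 2 := 1 - a with hbdef
  have hba : b ≠ a := hbx a
  have hml' : m (m k) = k := hm k
  set I : Fin n → Fin 2 := fun _ => a with hI
  set J : Fin n → Fin 2 := fun t => if t = k ∨ t = m k then b else a with hJ
  set K : Fin n → Fin 2 := fun t => if t = k ∨ t = l then I t else J t with hK
  set L : Fin n → Fin 2 := fun t => if t = k ∨ t = l then J t else I t with hL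
  have minor : singletProduct m χ I * singletProduct m χ J
      = singletProduct m χ K * singletProduct m χ L := by
    rw [hp I, hp J, hp K, hp L]
    have hKk : K k = I k := if_pos (Or.inl rfl)
    have hKl : K l = I l := if_pos (Or.inr rfl)
    have hLk : L k = J k := if_pos (Or.inl rfl)
    have hLl : L l = J l := if_pos (Or.inr rfl)
    have hKr : (fun t : {t : Fin n // t ≠ k ∧ t ≠ l} => K t.1) = fun t => J t.1 := by
      funext t
      exact if_neg (by rintro (h | h); exacts [t.2.1 h, t.2.2 h])
    have hLr : (fun t : {t : Fin n // t ≠ k ∧ t ≠ l} => L t.1) = fun t => I t.1 := by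
      funext t
      exact if_neg (by rintro (h | h); exacts [t.2.1 h, t.2.2 h])
    rw [hKk, hKl, hLk, hLl, hKr, hLr]
    ring
  have hKk' : K k = a := if_pos (Or.inl rfl)
  have hKmk : K (m k) = b := by
    have h1 : ¬(m k = k ∨ m k = l) := by rintro (h | h); exacts [hk h, hne h]
    have h2 : J (m k) = b := if_pos (Or.inr rfl)
    show (if m k = k ∨ m k = l then I (m k) else J (m k)) = b
    rw [if_neg h1, h2]
  have hKzero : singletProduct m χ K = 0 := by
    unfold singletProduct
    apply mul_eq_zero_of_left
    apply Finset.prod_eq_zero (Finset.mem_univ k)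
    rw [hKk', hKmk]
    exact if_neg fun hh => hba (hh.symm)
  have hIne : singletProduct m χ I ≠ 0 := by
    unfold singletProduct
    apply mul_ne_zero
    · rw [Finset.prod_eq_one fun t _ => if_pos rfl]
      exact one_ne_zero
    · exact Finset.prod_ne_zero_iff.mpr fun t _ => ha
  have hJne : singletProduct m χ J ≠ 0 := by
    unfold singletProduct
    apply mul_ne_zero
    · have hcond : ∀ t, (m t = k ∨ m t = m k) ↔ (t = k ∨ t = m k) := by
        intro t
        constructor
        · rintro (h | h)
          · right; rw [← h, hm t]
          · left; have := hm t; rw [h, hml'] at this; exact this.symm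
        · rintro (rfl | rfl)
          · exact Or.inr rfl
          · exact Or.inl hml'
      have : ∀ t : Fin n, J t = J (m t) := by
        intro t
        show (if t = k ∨ t = m k then b else a) = if m t = k ∨ m t = m k then b else a
        rw [if_congr (hcond t).symm rfl rfl]
      rw [Finset.prod_eq_one fun t _ => if_pos (this t)]
      exact one_ne_zero
    · refine Finset.prod_ne_zero_iff.mpr fun t ht => ?_
      have hmt : m t = t := (Finset.mem_filter.mp ht).2
      have h1 : t ≠ k := by rintro rfl; exact hk hmt
      have h2 : t ≠ m k := by
        rintro rfl
        rw [hml'] at hmt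
        exact hk hmt.symm
      have : J t = a := if_neg (by rintro (h | h); exacts [h1 h, h2 h])
      rw [this]
      exact ha
  rcases mul_eq_zero.mp (by rw [minor, hKzero, zero_mul]) with h0 | h0
  exacts [hIne h0, hJne h0]


lemma actLU_id (ψ : QState n) : actLU (fun _ => (1 : Matrix.specialUnitaryGroup (Fin 2) ℂ)) ψ = ψ := by
  funext I
  unfold actLU
  have hprod : ∀ J : Fin n → Fin 2,
      (∏ t : Fin n,
        ((1 : Matrix.specialUnitaryGroup (Fin 2) ℂ) : Matrix (Fin 2) (Fin 2) ℂ) (I t) (J t))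
      = if I = J then (1 : ℂ) else 0 := by
    intro J
    by_cases h : I = J
    · subst h
      simp [Matrix.one_apply]
    · obtain ⟨t, ht⟩ := Function.ne_iff.mp h
      rw [if_neg h]
      apply Finset.prod_eq_zero (Finset.mem_univ t)
      simp [Matrix.one_apply, ht]
  rw [Finset.sum_congr rfl fun J _ => by rw [hprod J]]
  simp [ite_mul, Finset.sum_ite_eq]

end Aux

/-- Two singlet products (with the same leftover qubit when `n` is
odd, and the same fixed single-qubit vector there) are local unitary equivalent up
to a nonzero scalar if and only if their matchings of entangled pairs are the
same. -/
theorem singlet_products_lu_equiv_iff {n : ℕ} (m m' : Fin n → Fin n)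
    (hm : IsMatching m) (hm' : IsMatching m')
    (hfix : ∀ k : Fin n, m k = k ↔ m' k = k)
    (χ : Fin 2 → ℂ) (hχ : χ ≠ 0) :
    (∃ (c : ℂ) (U : ∀ _ : Fin n, Matrix.specialUnitaryGroup (Fin 2) ℂ),
        c ≠ 0 ∧ actLU U (singletProduct m χ) = c • singletProduct m' χ) ↔
      m = m' := by
  constructor
  · rintro ⟨c, U, hc, hU⟩
    funext k
    by_cases hk : m k = k
    · rw [hk]; exact ((hfix k).mp hk).symm
    · have hk' : m' k ≠ k := fun h => hk ((hfix k).mpr h)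
      have hkl : k ≠ m k := fun h => hk h.symm
      have h1 : ProdForm k (m k) (singletProduct m χ) :=
        prodForm_singlet hm.1 hkl rfl χ
      have h2 : ProdForm k (m k) (actLU U (singletProduct m χ)) := prodForm_actLU hkl U h1
      rw [hU] at h2
      have h3 : ProdForm k (m k) (singletProduct m' χ) := by
        have h4 := prodForm_smul c⁻¹ h2
        rwa [smul_smul, inv_mul_cancel₀ hc, one_smul] at h4
      exact (singlet_prodForm hm'.1 hkl hk' hχ h3).symm
  · rintro rfl
    exact ⟨1, fun _ => 1, one_ne_zero, by rw [actLU_id, one_smul]⟩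
end
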